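/- arXiv:1712.04700 — 2 statements merged into one kernel-verified Lean document; each statement's English description precedes it below -/
import Mathlib

section
/- Let α be irrational with convergent denominators (q_n). Then limsup_{n→∞} (ln q_{n+1})/q_n = limsup_{k→∞} (1/|k|) · ln(1/‖kα‖), where ‖·‖ denotes the distance to the nearest integer and the limsup on the right is over nonzero integers k. -/
open Filter

/-- Distance from a real number to the nearest integer. -/
noncomputable def distToInt (θ : ℝ) : ℝ := |θ - round θ|

/-- The Gauss-map iterates: α₀ = α, α_{k+1} = α_k⁻¹ - ⌊α_k⁻¹⌋. -/
noncomputable def cfFrac (α : ℝ) : ℕ → ℝ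
  | 0 => α
  | k + 1 => (cfFrac α k)⁻¹ - ⌊(cfFrac α k)⁻¹⌋

/-- Partial quotients: a₀ = 0, a_k = ⌊α_{k-1}⁻¹⌋. -/
noncomputable def cfa (α : ℝ) : ℕ → ℤ
  | 0 => 0
  | k + 1 => ⌊(cfFrac α k)⁻¹⌋

/-- Denominators of the best rational approximations. -/
noncomputable def cfq (α : ℝ) : ℕ → ℤ
  | 0 => 1
  | 1 => cfa α 1
  | k + 2 => cfa α (k + 2) * cfq α (k + 1) + cfq α k

namespace Stmt1Aux

/-- Numerators. -/
noncomputable def cfp (α : ℝ) : ℕ → ℤ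
  | 0 => 0
  | 1 => 1
  | k + 2 => cfa α (k + 2) * cfp α (k + 1) + cfp α k

variable {α : ℝ} (hirr : Irrational α) (hα : α ∈ Set.Ioo (0 : ℝ) 1)

include hirr hα

lemma frac_prop : ∀ k, (cfFrac α k ∈ Set.Ioo (0:ℝ) 1) ∧ Irrational (cfFrac α k) := by
  intro k
  induction k with
  | zero => exact ⟨hα, hirr⟩
  | succ k ih =>
    obtain ⟨⟨h0, h1⟩, hi⟩ := ih
    have hinv : Irrational (cfFrac α k)⁻¹ := hi.inv
    have hnext : Irrational (cfFrac α (k+1)) := by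
      show Irrational ((cfFrac α k)⁻¹ - ⌊(cfFrac α k)⁻¹⌋)
      exact hinv.sub_intCast _
    refine ⟨⟨?_, ?_⟩, hnext⟩
    · rcases lt_or_eq_of_le (Int.floor_le (cfFrac α k)⁻¹) with h | h
      · show (0:ℝ) < (cfFrac α k)⁻¹ - ⌊(cfFrac α k)⁻¹⌋
        linarith
      · exact absurd h.symm (hinv.ne_int _)
    · show (cfFrac α k)⁻¹ - ⌊(cfFrac α k)⁻¹⌋ < 1
      have := Int.lt_floor_add_one (cfFrac α k)⁻¹
      linarith

lemma cfa_pos : ∀ k, 1 ≤ cfa α (k + 1) := by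
  intro k
  obtain ⟨⟨h0, h1⟩, hi⟩ := frac_prop hirr hα k
  have : (1:ℝ) < (cfFrac α k)⁻¹ := (one_lt_inv₀ h0).mpr h1
  show (1:ℤ) ≤ ⌊(cfFrac α k)⁻¹⌋
  exact Int.le_floor.mpr (by exact_mod_cast this.le)

lemma cfq_pos : ∀ n, 1 ≤ cfq α n := by
  intro n
  induction n using Nat.strong_induction_on with
  | _ n ih =>
    match n with
    | 0 => exact le_refl 1
    | 1 => exact cfa_pos hirr hα 0
    | (k+2) =>
      have h1 := ih (k+1) (by omega)
      have h0 := ih k (by omega)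
      have ha := cfa_pos hirr hα (k+1)
      show 1 ≤ cfa α (k+2) * cfq α (k+1) + cfq α k
      nlinarith

lemma cfq_mono : ∀ n, cfq α n ≤ cfq α (n + 1) := by
  intro n
  match n with
  | 0 => exact cfa_pos hirr hα 0
  | (k+1) =>
    have h1 := cfq_pos hirr hα (k+1)
    have h0 := cfq_pos hirr hα k
    have ha := cfa_pos hirr hα (k+1)
    show cfq α (k+1) ≤ cfa α (k+2) * cfq α (k+1) + cfq α k
    nlinarith

lemma cfq_mono' : Monotone (cfq α) :=
  monotone_nat_of_le_succ (cfq_mono hirr hα)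

lemma cfq_ge : ∀ n : ℕ, (n : ℤ) ≤ cfq α n := by
  intro n
  induction n using Nat.strong_induction_on with
  | _ n ih =>
    match n with
    | 0 => norm_num [cfq]
    | 1 => exact cfa_pos hirr hα 0
    | (k+2) =>
      have h1 := ih (k+1) (by omega)
      have h0 := cfq_pos hirr hα k
      have ha := cfa_pos hirr hα (k+1)
      have : cfq α (k+1) ≤ cfa α (k+2) * cfq α (k+1) := by nlinarith
      show ((k:ℤ)+2) ≤ cfa α (k+2) * cfq α (k+1) + cfq α k
      push_cast at h1 ⊢
      omega

end Stmt1Aux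

namespace Stmt1Aux
variable {α : ℝ} (hirr : Irrational α) (hα : α ∈ Set.Ioo (0 : ℝ) 1)

/-- The product of Gauss map iterates. -/
noncomputable def pp (α : ℝ) (n : ℕ) : ℝ := ∏ i ∈ Finset.range (n + 1), cfFrac α i

include hirr hα

lemma pp_mem : ∀ n, pp α n ∈ Set.Ioo (0:ℝ) 1 := by
  intro n
  induction n with
  | zero => simpa [pp] using (frac_prop hirr hα 0).1
  | succ n ih =>
    obtain ⟨h0, h1⟩ := ih
    obtain ⟨⟨g0, g1⟩, -⟩ := frac_prop hirr hα (n+1)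
    have : pp α (n+1) = pp α n * cfFrac α (n+1) := by
      simp [pp, Finset.prod_range_succ]
    rw [this]
    constructor
    · positivity
    · nlinarith

lemma pp_succ_le (n : ℕ) : pp α (n + 1) ≤ pp α n := by
  have h : pp α (n+1) = pp α n * cfFrac α (n+1) := by
    simp [pp, Finset.prod_range_succ]
  obtain ⟨h0, h1⟩ := pp_mem hirr hα n
  obtain ⟨⟨g0, g1⟩, -⟩ := frac_prop hirr hα (n+1)
  nlinarith

/-- The error term identity: qₙ α - pₙ = (-1)ⁿ ∏ αᵢ. -/
lemma eta_eq : ∀ n : ℕ, (cfq α n : ℝ) * α - (cfp α n : ℝ) = (-1)^n * pp α n := by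
  have key : ∀ n : ℕ,
      ((cfq α n : ℝ) * α - (cfp α n : ℝ) = (-1)^n * pp α n) ∧
      ((cfq α (n+1) : ℝ) * α - (cfp α (n+1) : ℝ) = (-1)^(n+1) * pp α (n+1)) := by
    intro n
    induction n with
    | zero =>
      constructor
      · simp [cfq, cfp, pp, cfFrac]
      · have hα0 : α ≠ 0 := ne_of_gt hα.1
        have e1 : cfq α (0+1) = cfa α 1 := rfl
        have e2 : cfp α (0+1) = 1 := rfl
        rw [e1, e2]
        have hpp : pp α (0+1) = α * (α⁻¹ - ⌊α⁻¹⌋) := by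
          simp [pp, Finset.prod_range_succ, cfFrac]
        rw [hpp]
        have ha : (cfa α 1 : ℝ) = ((⌊α⁻¹⌋ : ℤ) : ℝ) := by simp [cfa, cfFrac]
        rw [ha]
        push_cast
        field_simp
        ring
    | succ n ih =>
      obtain ⟨ih0, ih1⟩ := ih
      refine ⟨ih1, ?_⟩
      have hrec : (cfq α (n+2) : ℝ) * α - (cfp α (n+2) : ℝ) =
          (cfa α (n+2) : ℝ) * ((cfq α (n+1) : ℝ) * α - (cfp α (n+1) : ℝ)) +
          ((cfq α n : ℝ) * α - (cfp α n : ℝ)) := by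
        show ((cfa α (n+2) * cfq α (n+1) + cfq α n : ℤ) : ℝ) * α -
            ((cfa α (n+2) * cfp α (n+1) + cfp α n : ℤ) : ℝ) = _
        push_cast
        ring
      rw [hrec, ih0, ih1]
      -- Now use the continued fraction relation.
      obtain ⟨⟨g0, g1⟩, -⟩ := frac_prop hirr hα (n+1)
      have hfr : cfFrac α (n+2) = (cfFrac α (n+1))⁻¹ - ⌊(cfFrac α (n+1))⁻¹⌋ := rfl
      have hca : (cfa α (n+2) : ℝ) = ((⌊(cfFrac α (n+1))⁻¹⌋ : ℤ) : ℝ) := by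
        simp [cfa]
      have hprod : cfFrac α (n+1) * cfFrac α (n+2) = 1 - (cfa α (n+2) : ℝ) * cfFrac α (n+1) := by
        rw [hfr, hca]
        field_simp
      have hp2 : pp α (n+2) = pp α (n+1) * cfFrac α (n+2) := by
        simp [pp, Finset.prod_range_succ]
      have hp1 : pp α (n+1) = pp α n * cfFrac α (n+1) := by
        simp [pp, Finset.prod_range_succ]
      rw [hp2, hp1]
      linear_combination (-((-1:ℝ)^n) * pp α n) * hprod
  exact fun n => (key n).1

/-- Determinant identity. -/
lemma det_eq : ∀ n : ℕ, cfq α (n+1) * cfp α n - cfp α (n+1) * cfq α n = (-1)^(n+1) := by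
  intro n
  induction n with
  | zero => simp [cfq, cfp]
  | succ n ih =>
    show (cfa α (n+2) * cfq α (n+1) + cfq α n) * cfp α (n+1) -
        (cfa α (n+2) * cfp α (n+1) + cfp α n) * cfq α (n+1) = (-1)^(n+2)
    have : (cfa α (n+2) * cfq α (n+1) + cfq α n) * cfp α (n+1) -
        (cfa α (n+2) * cfp α (n+1) + cfp α n) * cfq α (n+1) =
        -(cfq α (n+1) * cfp α n - cfp α (n+1) * cfq α n) := by ring
    rw [this, ih]
    ring

/-- The key identity  q_{n+1}·|ηₙ| + qₙ·|η_{n+1}| = 1. -/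
lemma key_id (n : ℕ) : (cfq α (n+1) : ℝ) * pp α n + (cfq α n : ℝ) * pp α (n+1) = 1 := by
  have h0 := eta_eq hirr hα n
  have h1 := eta_eq hirr hα (n+1)
  have hdet := det_eq hirr hα n
  have hdetR : (cfq α (n+1) : ℝ) * (cfp α n : ℝ) - (cfp α (n+1) : ℝ) * (cfq α n : ℝ)
      = (-1)^(n+1) := by exact_mod_cast hdet
  have comb : (cfq α (n+1) : ℝ) * ((cfq α n : ℝ) * α - cfp α n)
      - (cfq α n : ℝ) * ((cfq α (n+1) : ℝ) * α - cfp α (n+1)) = (-1)^n := by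
    have : (cfq α (n+1) : ℝ) * ((cfq α n : ℝ) * α - cfp α n)
      - (cfq α n : ℝ) * ((cfq α (n+1) : ℝ) * α - cfp α (n+1))
      = -((cfq α (n+1) : ℝ) * (cfp α n : ℝ) - (cfp α (n+1) : ℝ) * (cfq α n : ℝ)) := by ring
    rw [this, hdetR]
    ring
  rw [h0, h1] at comb
  have hsq : ((-1:ℝ)^n) * ((-1:ℝ)^n) = 1 := by
    rw [← pow_add]
    exact Even.neg_one_pow ⟨n, rfl⟩
  linear_combination ((-1:ℝ)^n) * comb +
    (1 - (cfq α (n+1) : ℝ) * pp α n - (cfq α n : ℝ) * pp α (n+1)) * hsq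

lemma pp_le (n : ℕ) : pp α n ≤ 1 / (cfq α (n+1) : ℝ) := by
  have hk := key_id hirr hα n
  have hq1 : (1:ℝ) ≤ (cfq α (n+1) : ℝ) := by exact_mod_cast cfq_pos hirr hα (n+1)
  have hq0 : (1:ℝ) ≤ (cfq α n : ℝ) := by exact_mod_cast cfq_pos hirr hα n
  have hp := (pp_mem hirr hα (n+1)).1
  rw [le_div_iff₀ (by linarith)]
  nlinarith

lemma pp_ge (n : ℕ) : 1 / (2 * (cfq α (n+1) : ℝ)) ≤ pp α n := by
  have hk := key_id hirr hα n
  have hq1 : (1:ℝ) ≤ (cfq α (n+1) : ℝ) := by exact_mod_cast cfq_pos hirr hα (n+1)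
  have hq0 : (cfq α n : ℝ) ≤ (cfq α (n+1) : ℝ) := by exact_mod_cast cfq_mono hirr hα n
  have hps := pp_succ_le hirr hα n
  have hp := (pp_mem hirr hα (n+1)).1
  have hp0 := (pp_mem hirr hα n).1
  rw [div_le_iff₀ (by linarith)]
  nlinarith

end Stmt1Aux

namespace Stmt1Aux
variable {α : ℝ} (hirr : Irrational α) (hα : α ∈ Set.Ioo (0 : ℝ) 1)

lemma abs_add_eq' {a b : ℝ} (h : 0 ≤ a * b) : |a + b| = |a| + |b| := by
  rcases le_or_gt 0 a with ha | ha <;> rcases le_or_gt 0 b with hb | hb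
  · rw [abs_of_nonneg ha, abs_of_nonneg hb, abs_of_nonneg (by linarith)]
  · have ha0 : a = 0 := by nlinarith
    simp [ha0]
  · have hb0 : b = 0 := by nlinarith
    simp [hb0]
  · rw [abs_of_neg ha, abs_of_neg hb, abs_of_neg (by linarith)]
    ring

include hirr hα

lemma best_approx (n : ℕ) (k : ℤ) (hk : k ≠ 0) (hk2 : |k| < cfq α (n+1)) (p : ℤ) :
    pp α n ≤ |(k : ℝ) * α - (p : ℝ)| := by
  have hdet := det_eq hirr hα n
  have hsq : ((-1:ℤ)^n) * ((-1:ℤ)^n) = 1 := by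
    rw [← pow_add]; exact Even.neg_one_pow ⟨n, rfl⟩
  obtain ⟨x, hxdef⟩ : ∃ x : ℤ, x = (-1)^n * (cfp α (n+1) * k - cfq α (n+1) * p) := ⟨_, rfl⟩
  obtain ⟨y, hydef⟩ : ∃ y : ℤ, y = (-1)^n * (cfq α n * p - cfp α n * k) := ⟨_, rfl⟩
  have hxq : x * cfq α n + y * cfq α (n+1) = k := by
    rw [hxdef, hydef]
    linear_combination (-((-1:ℤ)^n) * k) * hdet + k * hsq
  have hxp : x * cfp α n + y * cfp α (n+1) = p := by
    rw [hxdef, hydef]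
    linear_combination (-((-1:ℤ)^n) * p) * hdet + p * hsq
  have hxqR : (x:ℝ) * (cfq α n : ℝ) + (y:ℝ) * (cfq α (n+1) : ℝ) = (k:ℝ) := by
    exact_mod_cast hxq
  have hxpR : (x:ℝ) * (cfp α n : ℝ) + (y:ℝ) * (cfp α (n+1) : ℝ) = (p:ℝ) := by
    exact_mod_cast hxp
  have hreal : (k:ℝ) * α - (p:ℝ) =
      (x:ℝ) * ((-1:ℝ)^n * pp α n) + (y:ℝ) * ((-1:ℝ)^(n+1) * pp α (n+1)) := by
    rw [← eta_eq hirr hα n, ← eta_eq hirr hα (n+1)]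
    linear_combination (-α) * hxqR + hxpR
  have hpn := (pp_mem hirr hα n).1
  have hpn1 := (pp_mem hirr hα (n+1)).1
  have habs : |((-1:ℝ)^n * pp α n)| = pp α n := by
    rw [abs_mul, abs_pow, abs_neg, abs_one, one_pow, one_mul, abs_of_pos hpn]
  have habs1 : |((-1:ℝ)^(n+1) * pp α (n+1))| = pp α (n+1) := by
    rw [abs_mul, abs_pow, abs_neg, abs_one, one_pow, one_mul, abs_of_pos hpn1]
  have hq0 : (1:ℤ) ≤ cfq α n := cfq_pos hirr hα n
  have hq1 : (1:ℤ) ≤ cfq α (n+1) := cfq_pos hirr hα (n+1)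
  rcases eq_or_ne y 0 with hy | hy
  · have hx : x ≠ 0 := by
      intro hx0
      rw [hx0, hy] at hxq
      simp at hxq
      exact hk hxq.symm
    have hxabs : (1:ℝ) ≤ |(x:ℝ)| := by exact_mod_cast Int.one_le_abs hx
    rw [hreal, hy]
    push_cast
    rw [zero_mul, add_zero, abs_mul, habs]
    nlinarith
  · rcases eq_or_ne x 0 with hx | hx
    · exfalso
      rw [hx, zero_mul, zero_add] at hxq
      have hyabs : (1:ℤ) ≤ |y| := Int.one_le_abs hy
      have habsmul : |y * cfq α (n+1)| = |y| * cfq α (n+1) := by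
        rw [abs_mul, abs_of_pos (by linarith : (0:ℤ) < cfq α (n+1))]
      have h5 : cfq α (n+1) ≤ |y| * cfq α (n+1) :=
        le_mul_of_one_le_left (by linarith) hyabs
      rw [← hxq, habsmul] at hk2
      omega
    · rcases lt_trichotomy (x * y) 0 with hxy | hxy | hxy
      · -- opposite signs: the two error terms have the same sign
        have hxyR : ((x:ℝ) * (y:ℝ)) < 0 := by exact_mod_cast hxy
        have hodd : ((-1:ℝ))^n * ((-1:ℝ))^(n+1) = -1 := by
          rw [← pow_add]
          exact Odd.neg_one_pow ⟨n, by ring⟩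
        have hsign : 0 ≤ ((x:ℝ) * ((-1:ℝ)^n * pp α n)) *
            ((y:ℝ) * ((-1:ℝ)^(n+1) * pp α (n+1))) := by
          have : ((x:ℝ) * ((-1:ℝ)^n * pp α n)) * ((y:ℝ) * ((-1:ℝ)^(n+1) * pp α (n+1)))
              = -((x:ℝ) * (y:ℝ)) * (pp α n * pp α (n+1)) := by
            rw [← mul_one (pp α n * pp α (n+1))]
            linear_combination ((x:ℝ) * (y:ℝ) * pp α n * pp α (n+1)) * hodd
          rw [this]
          have := mul_pos (neg_pos.mpr hxyR) (mul_pos hpn hpn1)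
          linarith
        have hxabs : (1:ℝ) ≤ |(x:ℝ)| := by exact_mod_cast Int.one_le_abs hx
        rw [hreal, abs_add_eq' hsign, abs_mul, habs, abs_mul, habs1]
        nlinarith [abs_nonneg ((y:ℝ)), mul_nonneg (abs_nonneg ((y:ℝ))) hpn1.le]
      · exact absurd hxy (mul_ne_zero hx hy)
      · -- same signs: |k| ≥ q_{n+1}, contradiction
        exfalso
        rcases mul_pos_iff.mp hxy with ⟨hx1, hy1⟩ | ⟨hx1, hy1⟩
        · have t1 : 0 < x * cfq α n := mul_pos hx1 (by linarith)
          have t2 : cfq α (n+1) ≤ y * cfq α (n+1) :=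
            le_mul_of_one_le_left (by linarith) (by linarith)
          have := le_abs_self k
          omega
        · have t1 : x * cfq α n < 0 := mul_neg_of_neg_of_pos hx1 (by linarith)
          have t2 : cfq α (n+1) ≤ (-y) * cfq α (n+1) :=
            le_mul_of_one_le_left (by linarith) (by linarith)
          have := neg_abs_le k
          have t3 : (-y) * cfq α (n+1) = -(y * cfq α (n+1)) := by ring
          omega

omit hirr hα

lemma distToInt_le_abs (θ : ℝ) (p : ℤ) : distToInt θ ≤ |θ - (p:ℝ)| := by
  rcases eq_or_ne p (round θ) with h | h
  · rw [h]; exact le_of_eq rfl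
  · have h1 : (1:ℝ) ≤ |(p:ℝ) - (round θ : ℝ)| := by
      have : (1:ℤ) ≤ |p - round θ| := Int.one_le_abs (sub_ne_zero.mpr h)
      exact_mod_cast this
    have h2 := abs_sub_round θ
    have key : |(p:ℝ) - (round θ:ℝ)| ≤ |θ - (round θ:ℝ)| + |θ - (p:ℝ)| := by
      have e : (p:ℝ) - (round θ:ℝ) = (θ - (round θ:ℝ)) + ((p:ℝ) - θ) := by ring
      rw [e]
      calc |(θ - (round θ:ℝ)) + ((p:ℝ) - θ)| ≤ |θ - (round θ:ℝ)| + |(p:ℝ) - θ| := abs_add_le _ _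
        _ = |θ - (round θ:ℝ)| + |θ - (p:ℝ)| := by rw [abs_sub_comm ((p:ℝ)) θ]
    show |θ - (round θ:ℝ)| ≤ |θ - (p:ℝ)|
    linarith

lemma distToInt_pos {θ : ℝ} (h : Irrational θ) : 0 < distToInt θ := by
  rw [distToInt, abs_pos]
  exact sub_ne_zero.mpr (h.ne_int _)

include hirr hα

lemma dist_le (n : ℕ) : distToInt ((cfq α n : ℝ) * α) ≤ pp α n := by
  calc distToInt ((cfq α n : ℝ) * α) ≤ |(cfq α n : ℝ) * α - (cfp α n : ℝ)| :=
        distToInt_le_abs _ _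
    _ = pp α n := by
        rw [eta_eq hirr hα n, abs_mul, abs_pow, abs_neg, abs_one, one_pow, one_mul,
          abs_of_pos (pp_mem hirr hα n).1]

lemma dist_ge (n : ℕ) (k : ℤ) (hk : k ≠ 0) (hk2 : |k| < cfq α (n+1)) :
    pp α n ≤ distToInt ((k:ℝ) * α) :=
  best_approx hirr hα n k hk hk2 (round ((k:ℝ) * α))

end Stmt1Aux

namespace Stmt1Aux

lemma ereal_le_of_forall_add {x y : EReal} (h : ∀ ε : ℝ, 0 < ε → x ≤ y + (ε : EReal)) :
    x ≤ y := by
  by_cases hy : y = ⊤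
  · simp [hy]
  by_cases hb : y = ⊥
  · have h1 := h 1 one_pos
    rw [hb] at h1
    simp only [EReal.bot_add] at h1
    rw [le_bot_iff.mp h1, hb]
  lift y to ℝ using ⟨hy, hb⟩
  by_contra hlt
  push_neg at hlt
  obtain ⟨z, hz1, hz2⟩ := EReal.exists_between_coe_real hlt
  have hε : (0:ℝ) < z - y := by
    have : (y:ℝ) < z := by exact_mod_cast hz1
    linarith
  have hle := h (z - y) hε
  rw [← EReal.coe_add] at hle
  rw [show y + (z - y) = z by ring] at hle
  exact lt_irrefl _ (lt_of_le_of_lt hle hz2)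

variable {α : ℝ} (hirr : Irrational α) (hα : α ∈ Set.Ioo (0 : ℝ) 1)
include hirr hα

lemma cfqR_one_le (n : ℕ) : (1:ℝ) ≤ (cfq α n : ℝ) := by
  exact_mod_cast cfq_pos hirr hα n

lemma L_le_R :
    limsup (fun n : ℕ => ((Real.log (cfq α (n + 1)) / (cfq α n : ℝ) : ℝ) : EReal)) atTop ≤
      limsup (fun k : ℤ =>
        ((Real.log (1 / distToInt ((k : ℝ) * α)) / |(k : ℝ)| : ℝ) : EReal)) cofinite := by
  set F : ℤ → EReal := fun k =>
    ((Real.log (1 / distToInt ((k : ℝ) * α)) / |(k : ℝ)| : ℝ) : EReal) with hF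
  have hq_tendsto : Tendsto (fun n : ℕ => cfq α n) atTop atTop :=
    tendsto_atTop_mono (cfq_ge hirr hα) tendsto_natCast_atTop_atTop
  have hmap : map (fun n : ℕ => cfq α n) atTop ≤ (cofinite : Filter ℤ) := by
    rw [Int.cofinite_eq]
    exact le_trans hq_tendsto le_sup_right
  have keyle : ∀ n : ℕ,
      ((Real.log (cfq α (n + 1)) / (cfq α n : ℝ) : ℝ) : EReal) ≤
        (F ∘ (fun n : ℕ => cfq α n)) n := by
    intro n
    have hq0 : (1:ℝ) ≤ (cfq α n : ℝ) := cfqR_one_le hirr hα n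
    have hq1 : (1:ℝ) ≤ (cfq α (n+1) : ℝ) := cfqR_one_le hirr hα (n+1)
    have hirrk : Irrational (((cfq α n : ℤ) : ℝ) * α) :=
      hirr.intCast_mul (by have := cfq_pos hirr hα n; omega)
    have hd0 : 0 < distToInt ((cfq α n : ℝ) * α) := distToInt_pos hirrk
    have hd1 : distToInt ((cfq α n : ℝ) * α) ≤ 1 / (cfq α (n+1) : ℝ) :=
      le_trans (dist_le hirr hα n) (pp_le hirr hα n)
    have hrec : (cfq α (n+1) : ℝ) ≤ 1 / distToInt ((cfq α n : ℝ) * α) := by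
      rw [le_div_iff₀ hd0]
      rw [le_div_iff₀ (by linarith : (0:ℝ) < (cfq α (n+1) : ℝ))] at hd1
      linarith [mul_comm (distToInt ((cfq α n : ℝ) * α)) ((cfq α (n+1) : ℝ))]
    have hlog : Real.log (cfq α (n+1)) ≤ Real.log (1 / distToInt ((cfq α n : ℝ) * α)) := by
      apply Real.log_le_log (by linarith) hrec
    show _ ≤ ((Real.log (1 / distToInt ((cfq α n : ℝ) * α)) / |((cfq α n : ℤ) : ℝ)| : ℝ) : EReal)
    rw [abs_of_pos (by linarith : (0:ℝ) < ((cfq α n : ℤ) : ℝ))]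
    rw [EReal.coe_le_coe_iff]
    gcongr
  calc limsup (fun n : ℕ => ((Real.log (cfq α (n + 1)) / (cfq α n : ℝ) : ℝ) : EReal)) atTop
      ≤ limsup (F ∘ (fun n : ℕ => cfq α n)) atTop :=
        limsup_le_limsup (Eventually.of_forall keyle)
    _ = limsup F (map (fun n : ℕ => cfq α n) atTop) := limsup_comp F _ _
    _ ≤ limsup F cofinite := limsup_le_limsup_of_le hmap

end Stmt1Aux

namespace Stmt1Aux
variable {α : ℝ} (hirr : Irrational α) (hα : α ∈ Set.Ioo (0 : ℝ) 1)
include hirr hα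

lemma Nset_nonempty (k : ℤ) : {n : ℕ | |k| < cfq α (n+1)}.Nonempty := by
  refine ⟨(|k|).toNat, ?_⟩
  have h1 : ((|k|).toNat + 1 : ℤ) ≤ cfq α ((|k|).toNat + 1) := by
    exact_mod_cast cfq_ge hirr hα ((|k|).toNat + 1)
  have h2 : ((|k|).toNat : ℤ) = |k| := Int.toNat_of_nonneg (abs_nonneg k)
  simp only [Set.mem_setOf_eq]
  omega

/-- Index function: N k is the least n with |k| < q_{n+1}. -/
noncomputable def Nk (α : ℝ) (k : ℤ) : ℕ := sInf {n : ℕ | |k| < cfq α (n+1)}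

lemma Nk_lt (k : ℤ) : |k| < cfq α (Nk α k + 1) :=
  Nat.sInf_mem (Nset_nonempty hirr hα k)

lemma Nk_ge (k : ℤ) (hk : k ≠ 0) : cfq α (Nk α k) ≤ |k| := by
  have h0 : cfq α 0 = 1 := rfl
  rcases hNk : Nk α k with _ | m
  · rw [h0]
    exact Int.one_le_abs hk
  · have hsinf : sInf {n : ℕ | |k| < cfq α (n+1)} = m + 1 := hNk
    have hnot := Nat.notMem_of_lt_sInf
      (show m < sInf {n : ℕ | |k| < cfq α (n+1)} by omega)
    simp only [Set.mem_setOf_eq, not_lt] at hnot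
    exact hnot

lemma Nk_tendsto : Tendsto (Nk α) cofinite atTop := by
  rw [tendsto_atTop]
  intro b
  rw [eventually_cofinite]
  apply Set.Finite.subset (Set.finite_Icc (-(cfq α b)) (cfq α b))
  intro k hk
  simp only [Set.mem_setOf_eq, not_le] at hk
  have h1 : |k| < cfq α (Nk α k + 1) := Nk_lt hirr hα k
  have h2 : cfq α (Nk α k + 1) ≤ cfq α b := cfq_mono' hirr hα (by omega)
  have := abs_lt.mp (lt_of_lt_of_le h1 h2)
  exact Set.mem_Icc.mpr ⟨by linarith [this.1], by linarith [this.2]⟩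

lemma bound_F (k : ℤ) (hk : k ≠ 0) :
    Real.log (1 / distToInt ((k : ℝ) * α)) / |(k : ℝ)| ≤
      (Real.log 2 + Real.log (cfq α (Nk α k + 1))) / (cfq α (Nk α k) : ℝ) := by
  set n := Nk α k with hn
  have hq0 : (1:ℝ) ≤ (cfq α n : ℝ) := cfqR_one_le hirr hα n
  have hq1 : (1:ℝ) ≤ (cfq α (n+1) : ℝ) := cfqR_one_le hirr hα (n+1)
  have hirrk : Irrational ((k : ℝ) * α) := hirr.intCast_mul hk
  have hd0 : 0 < distToInt ((k : ℝ) * α) := distToInt_pos hirrk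
  have hd1 : pp α n ≤ distToInt ((k : ℝ) * α) :=
    dist_ge hirr hα n k hk (Nk_lt hirr hα k)
  have hd2 : 1 / (2 * (cfq α (n+1) : ℝ)) ≤ distToInt ((k : ℝ) * α) :=
    le_trans (pp_ge hirr hα n) hd1
  have hdu : 1 / distToInt ((k : ℝ) * α) ≤ 2 * (cfq α (n+1) : ℝ) := by
    rw [div_le_iff₀ hd0]
    rw [div_le_iff₀ (by linarith : (0:ℝ) < 2 * (cfq α (n+1) : ℝ))] at hd2
    linarith
  have hdhalf : distToInt ((k : ℝ) * α) ≤ 1 / 2 := abs_sub_round _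
  have hnum0 : 0 ≤ Real.log (1 / distToInt ((k : ℝ) * α)) := by
    apply Real.log_nonneg
    rw [le_div_iff₀ hd0]
    linarith
  have hnum : Real.log (1 / distToInt ((k : ℝ) * α)) ≤
      Real.log 2 + Real.log (cfq α (n+1)) := by
    have := Real.log_le_log (by positivity) hdu
    rwa [Real.log_mul two_ne_zero (by linarith)] at this
  have habs : ((cfq α n : ℤ) : ℝ) ≤ |(k : ℝ)| := by
    have := Nk_ge hirr hα k hk
    have : ((cfq α n : ℤ) : ℝ) ≤ ((|k| : ℤ) : ℝ) := by exact_mod_cast this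
    rwa [Int.cast_abs] at this
  calc Real.log (1 / distToInt ((k : ℝ) * α)) / |(k : ℝ)|
      ≤ Real.log (1 / distToInt ((k : ℝ) * α)) / (cfq α n : ℝ) := by
        gcongr
    _ ≤ (Real.log 2 + Real.log (cfq α (n+1))) / (cfq α n : ℝ) := by
        gcongr

lemma R_le_L :
    limsup (fun k : ℤ =>
        ((Real.log (1 / distToInt ((k : ℝ) * α)) / |(k : ℝ)| : ℝ) : EReal)) cofinite ≤
      limsup (fun n : ℕ => ((Real.log (cfq α (n + 1)) / (cfq α n : ℝ) : ℝ) : EReal)) atTop := by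
  set B : ℕ → EReal := fun n => ((Real.log (cfq α (n + 1)) / (cfq α n : ℝ) : ℝ) : EReal)
    with hB
  set C : ℕ → EReal := fun n =>
    (((Real.log 2 + Real.log (cfq α (n+1))) / (cfq α n : ℝ) : ℝ) : EReal) with hC
  have step1 : limsup (fun k : ℤ =>
      ((Real.log (1 / distToInt ((k : ℝ) * α)) / |(k : ℝ)| : ℝ) : EReal)) cofinite ≤
      limsup (C ∘ Nk α) cofinite := by
    have hev : ∀ᶠ (k : ℤ) in cofinite,
        ((Real.log (1 / distToInt ((k : ℝ) * α)) / |(k : ℝ)| : ℝ) : EReal) ≤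
          (C ∘ Nk α) k := by
      filter_upwards [eventually_cofinite_ne (0 : ℤ)] with k hk
      exact EReal.coe_le_coe_iff.mpr (bound_F hirr hα k hk)
    exact limsup_le_limsup hev
  have step2 : limsup (C ∘ Nk α) cofinite ≤ limsup C atTop := by
    rw [limsup_comp]
    exact limsup_le_limsup_of_le (Nk_tendsto hirr hα)
  have step3 : limsup C atTop ≤ limsup B atTop := by
    apply ereal_le_of_forall_add
    intro ε hε
    obtain ⟨M, hM⟩ := exists_nat_ge (Real.log 2 / ε)
    have hev : ∀ᶠ n in atTop, C n ≤ (fun n => B n + ((ε : ℝ) : EReal)) n := by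
      filter_upwards [eventually_ge_atTop (M + 1)] with n hn
      have hq0 : (1:ℝ) ≤ (cfq α n : ℝ) := cfqR_one_le hirr hα n
      have hqn : (n : ℝ) ≤ (cfq α n : ℝ) := by exact_mod_cast cfq_ge hirr hα n
      have hMn : Real.log 2 / ε ≤ (n : ℝ) := by
        have : (M:ℝ) ≤ (n:ℝ) := by exact_mod_cast le_trans (by omega : M ≤ M + 1) hn
        linarith
      have hlog2 : Real.log 2 / (cfq α n : ℝ) ≤ ε := by
        rw [div_le_iff₀ (by linarith)]
        rw [div_le_iff₀ hε] at hMn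
        calc Real.log 2 ≤ ε * (n:ℝ) := by linarith [mul_comm (n:ℝ) ε]
          _ ≤ ε * (cfq α n : ℝ) := by
            apply mul_le_mul_of_nonneg_left _ hε.le
            linarith
      show (((Real.log 2 + Real.log (cfq α (n+1))) / (cfq α n : ℝ) : ℝ) : EReal) ≤
        ((Real.log (cfq α (n + 1)) / (cfq α n : ℝ) : ℝ) : EReal) + ((ε : ℝ) : EReal)
      rw [← EReal.coe_add, EReal.coe_le_coe_iff, add_div]
      linarith
    calc limsup C atTop ≤ limsup (fun n => B n + ((ε : ℝ) : EReal)) atTop :=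
          limsup_le_limsup hev
      _ ≤ limsup B atTop + limsup (fun _ : ℕ => ((ε : ℝ) : EReal)) atTop := by
          apply EReal.limsup_add_le
          · right
            rw [limsup_const]
            exact EReal.coe_ne_top ε
          · right
            rw [limsup_const]
            exact EReal.coe_ne_bot ε
      _ = limsup B atTop + ((ε : ℝ) : EReal) := by rw [limsup_const]
  exact le_trans step1 (le_trans step2 step3)

end Stmt1Aux

/-- For irrational α, limsup_{n→∞} (ln q_{n+1})/qₙ equals
    limsup_{|k|→∞, k ∈ ℤ} (1/|k|) ln(1/‖kα‖), as extended real numbers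
    (allowing the value +∞).  The right-hand limsup over nonzero integers k with
    |k| → ∞ is taken along the cofinite filter on ℤ. -/
theorem stmt1 (α : ℝ) (hirr : Irrational α) (hα : α ∈ Set.Ioo (0 : ℝ) 1) :
    limsup (fun n : ℕ => ((Real.log (cfq α (n + 1)) / (cfq α n : ℝ) : ℝ) : EReal)) atTop =
      limsup (fun k : ℤ =>
        ((Real.log (1 / distToInt ((k : ℝ) * α)) / |(k : ℝ)| : ℝ) : EReal)) cofinite :=
  le_antisymm (Stmt1Aux.L_le_R hirr hα) (Stmt1Aux.R_le_L hirr hα)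
end

section
/- Let α ∈ ℝ^d be such that x ↦ x + α is minimal on 𝕋^d (equivalently (1,α) is rationally independent), and let X : 𝕋^d → GL(2,ℝ) be continuous with |det X(x)| = 1 for all x and satisfying the relation X₂₁(x+α) = X₁₁(x) for all x. Then ∫_{𝕋^d} X₁₁(x)² dx ≥ 1/(4 (sup_x ‖X(x)‖)²). -/
open MeasureTheory Matrix

/-- Let x ↦ x + α be minimal on 𝕋^d, and X : 𝕋^d → GL(2,ℝ) continuous with
    |det X(x)| = 1, satisfying X₂₁(x+α) = X₁₁(x).  If M bounds the Euclidean operator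
    norm of X(x) for all x, then ∫ X₁₁² ≥ 1/(4M²). -/
theorem stmt10 (d : ℕ) (α : Fin d → AddCircle (1 : ℝ))
    (hmin : ∀ x : Fin d → AddCircle (1 : ℝ),
      Dense (Set.range fun n : ℤ => x + n • α))
    (X : (Fin d → AddCircle (1 : ℝ)) → Matrix (Fin 2) (Fin 2) ℝ)
    (hcont : Continuous X)
    (hdet : ∀ x, |(X x).det| = 1)
    (hinv : ∀ x, IsUnit (X x))
    (hshift : ∀ x, X (x + α) 1 0 = X x 0 0)
    (M : ℝ) (hM : 0 < M)
    (hMop : ∀ x (v₀ v₁ : ℝ),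
      Real.sqrt ((X x 0 0 * v₀ + X x 0 1 * v₁) ^ 2 + (X x 1 0 * v₀ + X x 1 1 * v₁) ^ 2) ≤
        M * Real.sqrt (v₀ ^ 2 + v₁ ^ 2)) :
    1 / (4 * M ^ 2) ≤ ∫ x, (X x 0 0) ^ 2 := by
  haveI : IsProbabilityMeasure (volume : Measure (AddCircle (1 : ℝ))) :=
    ⟨by rw [AddCircle.measure_univ]; norm_num⟩
  -- Pointwise bound: the first column has squared norm at least 1/M².
  have key : ∀ x, 1 / M ^ 2 ≤ (X x 0 0) ^ 2 + (X x 1 0) ^ 2 := by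
    intro x
    have h2 : (X x 0 1) ^ 2 + (X x 1 1) ^ 2 ≤ M ^ 2 := by
      have h := hMop x 0 1
      simp only [mul_zero, zero_add, mul_one] at h
      norm_num at h
      have h0 : (0:ℝ) ≤ (X x 0 1) ^ 2 + (X x 1 1) ^ 2 := by positivity
      nlinarith [Real.sq_sqrt h0, Real.sqrt_nonneg ((X x 0 1) ^ 2 + (X x 1 1) ^ 2)]
    have hd := hdet x
    rw [Matrix.det_fin_two] at hd
    have h1 : (X x 0 0 * X x 1 1 - X x 0 1 * X x 1 0) ^ 2 = 1 := by
      rw [← sq_abs, hd]; norm_num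
    rw [div_le_iff₀ (by positivity)]
    nlinarith [sq_nonneg (X x 0 0 * X x 0 1 + X x 1 0 * X x 1 1),
      mul_nonneg (add_nonneg (sq_nonneg (X x 0 0)) (sq_nonneg (X x 1 0)))
        (sub_nonneg.2 h2)]
  -- Continuity and integrability
  have hc00 : Continuous fun x => X x 0 0 :=
    (continuous_apply (0 : Fin 2)).comp ((continuous_apply (0 : Fin 2)).comp hcont)
  have hc10 : Continuous fun x => X x 1 0 :=
    (continuous_apply (0 : Fin 2)).comp ((continuous_apply (1 : Fin 2)).comp hcont)
  have hint : ∀ f : (Fin d → AddCircle (1:ℝ)) → ℝ, Continuous f →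
      Integrable f volume := fun f hf =>
    hf.integrable_of_hasCompactSupport (HasCompactSupport.of_compactSpace f)
  have ha : Integrable (fun x => (X x 0 0) ^ 2) volume := hint _ (hc00.pow 2)
  have hb : Integrable (fun x => (X x 1 0) ^ 2) volume := hint _ (hc10.pow 2)
  -- Translation invariance: ∫ b² = ∫ a²
  have hba : (∫ x, (X x 1 0) ^ 2) = ∫ x, (X x 0 0) ^ 2 := by
    have := integral_add_right_eq_self (μ := volume) (fun x => (X x 1 0) ^ 2) α
    rw [← this]
    congr 1
    funext x
    rw [hshift x]
  -- Integrate the pointwise bound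
  have hsum : 1 / M ^ 2 ≤ (∫ x, (X x 0 0) ^ 2) + ∫ x, (X x 1 0) ^ 2 := by
    have h := integral_mono (integrable_const (1 / M ^ 2)) (ha.add hb) key
    rw [integral_const] at h
    simp only [measure_univ, probReal_univ, ENNReal.toReal_one, one_smul, smul_eq_mul, one_mul] at h
    simp only [Pi.add_apply] at h
    rwa [integral_add ha hb] at h
  rw [hba] at hsum
  have hM2 : (0:ℝ) < M ^ 2 := by positivity
  rw [div_le_iff₀ (by positivity)]
  rw [div_le_iff₀ (by positivity)] at hsum
  nlinarith
end
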